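/- Let $N$ be a free abelian group of rank $d$, let $\sigma \subset N_\mathbb{R}$ be a $d$-dimensional simplicial cone generated by primitive lattice vectors $e_1,\dots,e_d$, and let $\varphi$ be the linear function on $\sigma$ with $\varphi(e_i) = 1$ for all $i$. Then $\lim_{t \to 1^-} (1-t)^d \sum_{n \in \sigma^\circ \cap N} t^{\varphi(n)}$ exists and equals $vol(\sigma)$, the index in $N$ of the subgroup generated by $e_1,\dots,e_d$. -/

import Mathlib

open Filter ENNReal

lemma tsum_pi_geom (u : ℝ≥0∞) : ∀ d : ℕ,
    ∑' m : Fin d → ℕ, u ^ (∑ i, m i) = ((1 - u)⁻¹) ^ d := by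
  intro d
  induction d with
  | zero =>
    rw [tsum_eq_single (fun i => 0) (by intro b hb; exact absurd (funext fun i => i.elim0) hb)]
    · simp
  | succ d ih =>
    rw [← (Fin.consEquiv (fun _ : Fin (d+1) => ℕ)).tsum_eq]
    have h : ∀ p : ℕ × (Fin d → ℕ),
        u ^ (∑ i, (Fin.consEquiv (fun _ : Fin (d+1) => ℕ)) p i) = u ^ p.1 * u ^ (∑ i, p.2 i) := by
      rintro ⟨k, m⟩
      simp [Fin.consEquiv, Fin.sum_cons, pow_add]
    rw [tsum_congr h, ENNReal.tsum_prod']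
    simp_rw [ENNReal.tsum_mul_left, ih, ENNReal.tsum_mul_right, ENNReal.tsum_geometric]
    ring

set_option maxHeartbeats 2000000

/-- For a `d`-dimensional simplicial cone `σ` generated by primitive lattice vectors
`e₁,…,e_d` and `φ` linear with `φ(eᵢ) = 1` (so `φ(n) = ∑ cᵢ` in coordinates `c`),
`lim_{t→1⁻} (1-t)^d ∑_{n ∈ σ°∩N} t^{φ(n)} = vol(σ) = [N : ℤe₁+⋯+ℤe_d] = |det(e)|`. -/
theorem stmt9 (d : ℕ) (hd : 0 < d) (e : Fin d → (Fin d → ℤ))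
    (hind : LinearIndependent ℝ (fun i => (fun j => (e i j : ℝ))))
    (hprim : ∀ i, ¬ ∃ (m : Fin d → ℤ) (k : ℤ), 1 < k ∧ e i = k • m)
    (c : (Fin d → ℤ) → (Fin d → ℝ))
    (hc : ∀ n : Fin d → ℤ,
      (∑ i, c n i • (fun j => (e i j : ℝ))) = fun j => (n j : ℝ)) :
    Tendsto
      (fun t : ℝ => (1 - t) ^ d *
        ∑' n : {n : Fin d → ℤ // ∀ i, 0 < c n i}, t ^ (∑ i, c n.1 i))
      (nhdsWithin 1 (Set.Ioo 0 1))
      (nhds |(Matrix.of fun i j => ((e i j : ℤ) : ℝ)).det|) := by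
  classical
  set eR : Fin d → (Fin d → ℝ) := fun i => (fun j => (e i j : ℝ)) with heR
  -- uniqueness of coordinates
  have uniq : ∀ u v : Fin d → ℝ, (∑ i, u i • eR i) = (∑ i, v i • eR i) → u = v := by
    intro u v huv
    funext i
    have h0 : ∑ i, (u i - v i) • eR i = 0 := by
      simp_rw [sub_smul, Finset.sum_sub_distrib, huv, sub_self]
    have := Fintype.linearIndependent_iff.mp hind (fun i => u i - v i) h0 i
    linarith [this]
  -- T : integer combinations
  set T : (Fin d → ℤ) → (Fin d → ℤ) := fun m => ∑ i, m i • e i with hT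
  have hcastT : ∀ m : Fin d → ℤ, (fun j => ((T m) j : ℝ)) = ∑ i, (m i : ℝ) • eR i := by
    intro m
    funext j
    simp only [hT, Finset.sum_apply, Pi.smul_apply, smul_eq_mul, heR]
    push_cast
    ring
  have hcT : ∀ (x m : Fin d → ℤ) (i : Fin d), c (x + T m) i = c x i + (m i : ℝ) := by
    intro x m
    have : c (x + T m) = fun i => c x i + (m i : ℝ) := by
      apply uniq
      rw [hc (x + T m)]
      have : ∑ i, (c x i + (m i : ℝ)) • eR i
          = (∑ i, c x i • eR i) + ∑ i, (m i : ℝ) • eR i := by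
        simp_rw [add_smul, Finset.sum_add_distrib]
      rw [this, hc x, ← hcastT m]
      funext j
      simp only [Pi.add_apply]
      push_cast
      simp
    intro i; rw [this]
  have c_inj : ∀ x y : Fin d → ℤ, c x = c y → x = y := by
    intro x y hxy
    have : (fun j => (x j : ℝ)) = fun j => (y j : ℝ) := by
      rw [← hc x, ← hc y, hxy]
    funext j
    exact_mod_cast congrFun this j
  -- the lattice generated by the e i
  set Λ : Submodule ℤ (Fin d → ℤ) := Submodule.span ℤ (Set.range e) with hΛ
  have memΛ : ∀ x, x ∈ Λ ↔ ∃ m : Fin d → ℤ, T m = x := by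
    intro x
    rw [hΛ, Submodule.mem_span_range_iff_exists_fun]
  have heΛ : ∀ i, e i ∈ Λ := fun i => Submodule.subset_span ⟨i, rfl⟩
  -- e is ℤ-linearly independent
  have heZ : LinearIndependent ℤ e := by
    rw [Fintype.linearIndependent_iff]
    intro g hg i
    have h0 : ∑ i, (g i : ℝ) • eR i = ∑ i, (0:ℝ) • eR i := by
      simp only [zero_smul, Finset.sum_const_zero]
      have hTg : T g = 0 := hg
      rw [← hcastT g, hTg]
      funext j; simp
    have := congrFun (uniq _ _ h0) i
    exact_mod_cast this
  let eb : Module.Basis (Fin d) ℤ Λ := Module.Basis.span heZ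
  -- Smith normal form
  obtain ⟨n, snf⟩ := Submodule.smithNormalForm (Pi.basisFun ℤ (Fin d)) Λ
  have hnd : d = n := by
    have h1 : Module.finrank ℤ Λ = d := by
      rw [Module.finrank_eq_card_basis eb, Fintype.card_fin]
    have h2 : Module.finrank ℤ Λ = n := by
      rw [Module.finrank_eq_card_basis snf.bN, Fintype.card_fin]
    omega
  subst hnd
  set f : Fin d ↪ Fin d := snf.f with hf
  have hfb : Function.Bijective f := (Finite.injective_iff_bijective).mp f.injective
  set fe : Fin d ≃ Fin d := Equiv.ofBijective f hfb with hfe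
  set a : Fin d → ℤ := snf.a with ha
  set a' : Fin d → ℤ := fun j => a (fe.symm j) with ha'
  have ha'f : ∀ i, a' (f i) = a i := by
    intro i
    show a (fe.symm (f i)) = a i
    exact congrArg a (fe.symm_apply_apply i)
  have hA : ∀ i, (snf.bN i : Fin d → ℤ) = a i • snf.bM (f i) := snf.snf
  have ha0 : ∀ i, a i ≠ 0 := by
    intro i hai
    have h0 : (snf.bN i : Fin d → ℤ) = 0 := by rw [hA i, hai, zero_smul]
    have : (snf.bN i : Λ) ≠ 0 := Module.Basis.ne_zero snf.bN i
    exact this (Subtype.ext h0)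
  have ha'0 : ∀ j, a' j ≠ 0 := fun j => ha0 _
  -- membership in Λ via divisibility of coordinates
  have mem_iff_dvd : ∀ x : Fin d → ℤ, x ∈ Λ ↔ ∀ j, a' j ∣ snf.bM.repr x j := by
    intro x
    rw [Module.Basis.mem_submodule_iff' snf.bN]
    constructor
    · rintro ⟨co, rfl⟩ j
      have : ∑ i, co i • ((snf.bN i : Fin d → ℤ)) = ∑ i, (co i * a i) • snf.bM (f i) := by
        refine Finset.sum_congr rfl fun i _ => ?_
        rw [hA i, smul_smul]
      rw [this]
      have hsum : ∑ i, (co i * a i) • snf.bM (f i) = ∑ j', (co (fe.symm j') * a' j') • snf.bM j' := by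
        rw [← Equiv.sum_comp fe (fun j' => (co (fe.symm j') * a' j') • snf.bM j')]
        refine Finset.sum_congr rfl fun i _ => ?_
        have h1 : fe.symm (fe i) = i := fe.symm_apply_apply i
        have h2 : fe i = f i := rfl
        rw [h2] at h1 ⊢
        rw [h1, ha'f]
      rw [hsum, Module.Basis.repr_sum_self]
      exact dvd_mul_left _ _
    · intro hdvd
      refine ⟨fun i => snf.bM.repr x (f i) / a i, ?_⟩
      have hx : x = ∑ j, snf.bM.repr x j • snf.bM j := (Module.Basis.sum_repr snf.bM x).symm
      conv_lhs => rw [hx]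
      rw [← Equiv.sum_comp fe (fun j => snf.bM.repr x j • snf.bM j)]
      refine Finset.sum_congr rfl fun i _ => ?_
      have h2 : fe i = f i := rfl
      rw [h2, hA i, smul_smul]
      congr 1
      rw [Int.ediv_mul_cancel]
      have := hdvd (f i)
      rwa [ha'f] at this
  -- map through bM.equivFun
  set I' : Submodule ℤ (Fin d → ℤ) := Submodule.pi Set.univ (fun j => Ideal.span {a' j}) with hI'
  have hmap : Submodule.map (snf.bM.equivFun : (Fin d → ℤ) →ₗ[ℤ] (Fin d → ℤ)) Λ = I' := by
    ext x
    simp only [Submodule.mem_map, hI', Submodule.mem_pi, Set.mem_univ, forall_true_left,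
      Ideal.mem_span_singleton]
    constructor
    · rintro ⟨y, hy, rfl⟩ j
      have := (mem_iff_dvd y).mp hy j
      simpa [Module.Basis.equivFun_apply] using this
    · intro hdvd
      refine ⟨snf.bM.equivFun.symm x, ?_, by simp only [LinearEquiv.coe_coe, LinearEquiv.apply_symm_apply]⟩
      rw [mem_iff_dvd]
      intro j
      have : snf.bM.repr (snf.bM.equivFun.symm x) j = x j := by
        rw [Module.Basis.equivFun_symm_apply, Module.Basis.repr_sum_self]
      rw [this]; exact hdvd j
  -- quotient equivalence and cardinality
  haveI : ∀ j, NeZero (a' j).natAbs := fun j => ⟨Int.natAbs_ne_zero.mpr (ha'0 j)⟩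
  let Qe : ((Fin d → ℤ) ⧸ Λ) ≃ (∀ j, ZMod (a' j).natAbs) :=
    ((Submodule.Quotient.equiv Λ I' snf.bM.equivFun hmap).trans
      (Submodule.quotientPi (fun j => Ideal.span {a' j}))).toEquiv.trans
      (Equiv.piCongrRight fun j => (Int.quotientSpanEquivZMod (a' j)).toEquiv)
  haveI hfinQ : Finite ((Fin d → ℤ) ⧸ Λ) := Finite.of_equiv _ Qe.symm
  have cardQ : Nat.card ((Fin d → ℤ) ⧸ Λ) = ∏ j, (a' j).natAbs := by
    rw [Nat.card_congr Qe, Nat.card_pi]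
    simp [Nat.card_zmod]
  -- subtraction version of hcT
  have hcsub : ∀ (x m : Fin d → ℤ) (i : Fin d), c (x - T m) i = c x i - (m i : ℝ) := by
    intro x m i
    have h := hcT (x - T m) m i
    rw [sub_add_cancel] at h
    linarith
  have hT0 : T 0 = 0 := by
    funext j
    simp [hT]
  -- the residue set
  let Rty := {r : Fin d → ℤ // ∀ i, 0 < c r i ∧ c r i ≤ 1}
  have hbij : Function.Bijective (fun r : Rty => (Submodule.Quotient.mk r.1 : (Fin d → ℤ) ⧸ Λ)) := by
    constructor
    · rintro ⟨r, hr⟩ ⟨r', hr'⟩ hmk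
      obtain ⟨m, hm⟩ := (memΛ _).mp ((Submodule.Quotient.eq Λ).mp hmk)
      have hr1 : r = r' + T m := by rw [hm]; abel
      have hmz : ∀ i, m i = 0 := by
        intro i
        have h1 : c r i = c r' i + (m i : ℝ) := by rw [hr1]; exact hcT r' m i
        have h2 := hr i
        have h3 := hr' i
        have : (-1 : ℝ) < (m i : ℝ) ∧ (m i : ℝ) < 1 := by constructor <;> linarith
        have h4 : (-1 : ℤ) < m i := by exact_mod_cast this.1
        have h5 : m i < 1 := by exact_mod_cast this.2
        omega
      have : m = 0 := funext hmz
      rw [this, hT0, add_zero] at hr1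
      exact Subtype.ext hr1
    · intro q
      obtain ⟨nn, rfl⟩ := Submodule.Quotient.mk_surjective Λ q
      set mz : Fin d → ℤ := fun i => ⌈c nn i⌉ - 1 with hmz
      refine ⟨⟨nn - T mz, ?_⟩, ?_⟩
      · intro i
        have h := hcsub nn mz i
        have hle := Int.le_ceil (c nn i)
        have hlt := Int.ceil_lt_add_one (c nn i)
        constructor
        · rw [h, hmz]
          push_cast
          linarith
        · rw [h, hmz]
          push_cast
          linarith
      · rw [Submodule.Quotient.eq]
        refine (memΛ _).mpr ⟨-mz, ?_⟩
        have : T (-mz) = -T mz := by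
          funext j
          simp [hT, Finset.sum_apply, neg_smul, Finset.sum_neg_distrib]
        rw [this]
        funext j; simp only [Pi.sub_apply, Pi.neg_apply]; ring
  haveI hfinR : Finite Rty := Finite.of_equiv _ (Equiv.ofBijective _ hbij).symm
  haveI : Fintype Rty := Fintype.ofFinite Rty
  have cardR : (Fintype.card Rty : ℕ) = ∏ j, (a' j).natAbs := by
    rw [← Nat.card_eq_fintype_card, Nat.card_congr (Equiv.ofBijective _ hbij), cardQ]
  -- determinant facts
  set W : Matrix (Fin d) (Fin d) ℤ := Matrix.of (fun i j => e i j) with hW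
  have hdetW : W.det ≠ 0 := by
    intro h0
    haveI : Nonempty (Fin d) := ⟨⟨0, hd⟩⟩
    have hcard : Fintype.card (Fin d) = Module.finrank ℝ (Fin d → ℝ) := by
      simp [Module.finrank_fintype_fun_eq_card]
    let Bb := basisOfLinearIndependentOfCardEqFinrank hind hcard
    have hBb : ⇑Bb = eR := coe_basisOfLinearIndependentOfCardEqFinrank _ _
    have hunit : IsUnit ((Pi.basisFun ℝ (Fin d)).det ⇑Bb) := (Pi.basisFun ℝ (Fin d)).isUnit_det Bb
    have htm : (Pi.basisFun ℝ (Fin d)).det ⇑Bb = ((W.map (Int.cast : ℤ → ℝ)).transpose).det := by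
      rw [Module.Basis.det_apply]
      congr 1
      ext i j
      rw [Module.Basis.toMatrix_apply, Pi.basisFun_repr, hBb]
      rfl
    have hcast : ((W.map (Int.cast : ℤ → ℝ))).det = ((W.det : ℤ) : ℝ) := by
      rw [show (W.map (Int.cast : ℤ → ℝ)) = (Int.castRingHom ℝ).mapMatrix W from rfl,
        ← RingHom.map_det]
      rfl
    rw [htm, Matrix.det_transpose, hcast, h0] at hunit
    simp at hunit
  set Nm : Matrix (Fin d) (Fin d) ℤ := Matrix.of (fun i j => (snf.bN i : Fin d → ℤ) j) with hNm
  have hCW : ∃ C : Matrix (Fin d) (Fin d) ℤ, W = C * Nm := by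
    refine ⟨Matrix.of (fun i k => snf.bN.repr ⟨e i, heΛ i⟩ k), ?_⟩
    ext i j
    rw [Matrix.mul_apply]
    have hsum : e i = ∑ k, (snf.bN.repr ⟨e i, heΛ i⟩ k) • (snf.bN k : Fin d → ℤ) := by
      have h1 := Module.Basis.sum_repr snf.bN ⟨e i, heΛ i⟩
      have h2 := congrArg (Subtype.val : Λ → (Fin d → ℤ)) h1
      rw [Submodule.coe_sum] at h2
      simp only [SetLike.val_smul] at h2
      exact h2.symm
    have := congrFun hsum j
    rw [Finset.sum_apply] at this
    simpa [hW, hNm, Pi.smul_apply, smul_eq_mul] using this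
  have hNC : ∃ C' : Matrix (Fin d) (Fin d) ℤ, Nm = C' * W := by
    choose mm hmm using fun k => (memΛ _).mp (snf.bN k).2
    refine ⟨Matrix.of (fun k i => mm k i), ?_⟩
    ext k j
    rw [Matrix.mul_apply]
    have := congrFun (hmm k) j
    simp only [hT, Finset.sum_apply, Pi.smul_apply, smul_eq_mul] at this
    rw [hNm]
    simp only [Matrix.of_apply]
    rw [← this]
    rfl
  obtain ⟨Cm, hCm⟩ := hCW
  obtain ⟨C'm, hC'm⟩ := hNC
  have hWN : W.det.natAbs = Nm.det.natAbs := by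
    have h1 : W.det = Cm.det * C'm.det * W.det := by
      conv_lhs => rw [hCm, Matrix.det_mul, hC'm, Matrix.det_mul]
      ring
    have h2 : Cm.det * C'm.det = 1 := by
      have := mul_right_cancel₀ hdetW (h1.symm.trans (one_mul W.det).symm)
      linarith [this]
    have hCunit : Cm.det.natAbs = 1 :=
      Int.isUnit_iff_natAbs_eq.mp (IsUnit.of_mul_eq_one _ h2)
    rw [hCm, Matrix.det_mul, Int.natAbs_mul, hCunit, one_mul]
  set P : Matrix (Fin d) (Fin d) ℤ := Matrix.of (fun i j => snf.bM (f i) j) with hP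
  have hNmP : Nm = Matrix.diagonal a * P := by
    ext i j
    rw [Matrix.diagonal_mul]
    have := congrFun (hA i) j
    simpa [hNm, hP, Pi.smul_apply, smul_eq_mul] using this
  have hPunit : P.det.natAbs = 1 := by
    have htr : P.transpose = (Pi.basisFun ℤ (Fin d)).toMatrix ⇑(snf.bM.reindex fe.symm) := by
      ext i j
      rw [Module.Basis.toMatrix_apply, Pi.basisFun_repr, Module.Basis.reindex_apply]
      rfl
    have hu := (Pi.basisFun ℤ (Fin d)).isUnit_det (snf.bM.reindex fe.symm)
    rw [Module.Basis.det_apply, ← htr, Matrix.det_transpose] at hu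
    exact Int.isUnit_iff_natAbs_eq.mp hu
  have hdetfinal : W.det.natAbs = ∏ j, (a' j).natAbs := by
    rw [hWN, hNmP, Matrix.det_mul, Int.natAbs_mul, hPunit, mul_one, Matrix.det_diagonal]
    rw [show (∏ i, a i).natAbs = ∏ i, (a i).natAbs from map_prod Int.natAbsHom a Finset.univ]
    exact (Equiv.prod_comp fe.symm (fun j => (a j).natAbs)).symm ▸ rfl
  -- ceil of residue coordinates is 1
  have hceil1 : ∀ (r : Fin d → ℤ), (∀ i, 0 < c r i ∧ c r i ≤ 1) → ∀ i, ⌈c r i⌉ = 1 := by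
    intro r hr i
    have := hr i
    rw [Int.ceil_eq_iff]
    push_cast
    constructor <;> linarith [this.1, this.2]
  -- decomposition of the open cone points
  let E : ((Fin d → ℕ) × Rty) ≃ {n : Fin d → ℤ // ∀ i, 0 < c n i} :=
  { toFun := fun p => ⟨p.2.1 + T (fun i => (p.1 i : ℤ)), by
      intro i
      rw [hcT]
      have h1 := (p.2.2 i).1
      have h2 : (0:ℝ) ≤ ((p.1 i : ℤ) : ℝ) := by positivity
      linarith⟩
    invFun := fun n => ⟨fun i => (⌈c n.1 i⌉ - 1).toNat,
      ⟨n.1 - T (fun i => ⌈c n.1 i⌉ - 1), by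
        intro i
        rw [hcsub]
        have hle := Int.le_ceil (c n.1 i)
        have hlt := Int.ceil_lt_add_one (c n.1 i)
        constructor <;> · push_cast; linarith⟩⟩
    left_inv := by
      rintro ⟨m, r⟩
      have hcn : ∀ i, c (r.1 + T (fun i => (m i : ℤ))) i = c r.1 i + (m i : ℤ) :=
        fun i => hcT r.1 _ i
      have hceil : ∀ i, ⌈c (r.1 + T (fun i => (m i : ℤ))) i⌉ = 1 + (m i : ℤ) := by
        intro i
        rw [hcn i, Int.ceil_add_intCast, hceil1 r.1 r.2 i]
      have hmz : (fun i => ⌈c (r.1 + T (fun i => (m i : ℤ))) i⌉ - 1) = fun i => (m i : ℤ) := by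
        funext i
        rw [hceil i]
        ring
      refine Prod.ext ?_ ?_
      · funext i
        show (⌈c (r.1 + T (fun i => (m i : ℤ))) i⌉ - 1).toNat = m i
        rw [hceil i]
        simp
      · apply Subtype.ext
        show r.1 + T (fun i => (m i : ℤ)) - T _ = r.1
        rw [hmz]
        abel
    right_inv := by
      rintro ⟨nn, hn⟩
      apply Subtype.ext
      have hge : ∀ i, 1 ≤ ⌈c nn i⌉ := fun i => Int.ceil_pos.mpr (hn i)
      have hcast : (fun i => ((⌈c nn i⌉ - 1).toNat : ℤ)) = fun i => ⌈c nn i⌉ - 1 := by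
        funext i
        rw [Int.toNat_of_nonneg (by have := hge i; omega)]
      show (nn - T (fun i => ⌈c nn i⌉ - 1)) + T (fun i => ((⌈c nn i⌉ - 1).toNat : ℤ)) = nn
      rw [hcast]
      abel }
  -- the key identity for each t in (0,1)
  have key : ∀ t : ℝ, t ∈ Set.Ioo (0:ℝ) 1 →
      (1 - t) ^ d * ∑' n : {n : Fin d → ℤ // ∀ i, 0 < c n i}, t ^ (∑ i, c n.1 i)
        = ∑' r : Rty, t ^ (∑ i, c r.1 i) := by
    rintro t ⟨ht0, ht1⟩
    set u := ENNReal.ofReal t with hu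
    have hu0 : u ≠ 0 := by
      rw [hu, Ne, ENNReal.ofReal_eq_zero]
      linarith
    have hut : u ≠ ⊤ := ENNReal.ofReal_ne_top
    have hFr : ∀ x : ℝ, u ^ x = ENNReal.ofReal (t ^ x) := fun x =>
      ENNReal.ofReal_rpow_of_pos ht0
    have hcE : ∀ p : (Fin d → ℕ) × Rty,
        (∑ i, c (E p).1 i) = ((∑ i, p.1 i : ℕ) : ℝ) + ∑ i, c p.2.1 i := by
      rintro ⟨m, r⟩
      have : ∀ i, c (E (m, r)).1 i = c r.1 i + (m i : ℝ) := by
        intro i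
        have := hcT r.1 (fun i => (m i : ℤ)) i
        show c (r.1 + T (fun i => (m i : ℤ))) i = _
        simpa using this
      rw [Finset.sum_congr rfl (fun i _ => this i), Finset.sum_add_distrib]
      push_cast
      ring
    have hS : ∑' n : {n : Fin d → ℤ // ∀ i, 0 < c n i}, u ^ (∑ i, c n.1 i)
        = ((1 - u)⁻¹) ^ d * ∑' r : Rty, u ^ (∑ i, c r.1 i) := by
      rw [← E.tsum_eq (fun n : {n : Fin d → ℤ // ∀ i, 0 < c n i} => u ^ (∑ i, c n.1 i))]
      have step : ∀ p : (Fin d → ℕ) × Rty,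
          u ^ (∑ i, c (E p).1 i) = u ^ (∑ i, p.1 i) * u ^ (∑ i, c p.2.1 i) := by
        intro p
        rw [hcE p, ENNReal.rpow_add _ _ hu0 hut, ENNReal.rpow_natCast]
      rw [tsum_congr step, ENNReal.tsum_prod']
      simp_rw [ENNReal.tsum_mul_left]
      rw [ENNReal.tsum_mul_right, tsum_pi_geom]
    have hreal : ∑' n : {n : Fin d → ℤ // ∀ i, 0 < c n i}, t ^ (∑ i, c n.1 i)
        = (∑' n : {n : Fin d → ℤ // ∀ i, 0 < c n i}, u ^ (∑ i, c n.1 i)).toReal := by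
      rw [ENNReal.tsum_toReal_eq (fun n => by rw [hFr]; exact ENNReal.ofReal_ne_top)]
      exact tsum_congr fun n => by
        rw [hFr, ENNReal.toReal_ofReal (Real.rpow_nonneg ht0.le _)]
    have h1u : (1 - u).toReal = 1 - t := by
      rw [hu, show (1:ℝ≥0∞) = ENNReal.ofReal 1 from ENNReal.ofReal_one.symm,
        ← ENNReal.ofReal_sub 1 ht0.le, ENNReal.toReal_ofReal (by linarith)]
    have hWr : (∑' r : Rty, u ^ (∑ i, c r.1 i)).toReal = ∑' r : Rty, t ^ (∑ i, c r.1 i) := by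
      rw [ENNReal.tsum_toReal_eq (fun r => by rw [hFr]; exact ENNReal.ofReal_ne_top)]
      exact tsum_congr fun r => by
        rw [hFr, ENNReal.toReal_ofReal (Real.rpow_nonneg ht0.le _)]
    have hu1 : u < 1 := by
      rw [hu, ← ENNReal.ofReal_one]
      exact (ENNReal.ofReal_lt_ofReal_iff one_pos).mpr ht1
    have hinvne : ((1 - u)⁻¹ : ℝ≥0∞) ≠ ⊤ := by
      rw [Ne, ENNReal.inv_eq_top, tsub_eq_zero_iff_le]
      exact not_le.mpr hu1
    rw [hreal, hS, ENNReal.toReal_mul, ENNReal.toReal_pow, ENNReal.toReal_inv, h1u, hWr]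
    have hne : (1:ℝ) - t ≠ 0 := (sub_pos.mpr ht1).ne'
    rw [← mul_assoc, ← mul_pow, mul_inv_cancel₀ hne, one_pow, one_mul]
  -- the limit of the right-hand side
  have htsf : ∀ (g : Rty → ℝ), ∑' r : Rty, g r = ∑ r : Rty, g r := fun g => tsum_fintype g
  have hlim : Tendsto (fun t : ℝ => ∑' r : Rty, t ^ (∑ i, c r.1 i))
      (nhdsWithin 1 (Set.Ioo 0 1)) (nhds (Fintype.card Rty : ℝ)) := by
    have hcc : (Fintype.card Rty : ℝ) = ∑ _r : Rty, (1:ℝ) := by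
      rw [Finset.sum_const, Finset.card_univ, nsmul_eq_mul, mul_one]
    rw [hcc]
    have heq : ∀ t : ℝ, ∑' r : Rty, t ^ (∑ i, c r.1 i) = ∑ r : Rty, t ^ (∑ i, c r.1 i) :=
      fun t => htsf _
    refine Tendsto.congr (fun t => (heq t).symm) ?_
    refine tendsto_finset_sum _ fun r _ => ?_
    have hco : ContinuousAt (fun t : ℝ => t ^ (∑ i, c r.1 i)) 1 :=
      Real.continuousAt_rpow_const 1 _ (Or.inl one_ne_zero)
    have h1 : (1:ℝ) ^ (∑ i, c r.1 i) = 1 := Real.one_rpow _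
    have := hco.tendsto.mono_left (nhdsWithin_le_nhds (s := Set.Ioo (0:ℝ) 1))
    rwa [h1] at this
  -- identify the limit value with the determinant
  have hdetval : (Fintype.card Rty : ℝ) = |(Matrix.of fun i j => ((e i j : ℤ) : ℝ)).det| := by
    have hcast : (Matrix.of fun i j => ((e i j : ℤ) : ℝ)).det = ((W.det : ℤ) : ℝ) := by
      rw [show (Matrix.of fun i j => ((e i j : ℤ) : ℝ)) = (Int.castRingHom ℝ).mapMatrix W from rfl,
        ← RingHom.map_det]
      rfl
    rw [hcast, cardR, ← hdetfinal]
    push_cast [Nat.cast_natAbs]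
    norm_num
  rw [hdetval] at hlim
  refine Tendsto.congr' ?_ hlim
  filter_upwards [self_mem_nhdsWithin] with t ht
  exact (key t ht).symm
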